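/- For positive integers r ≤ d, the sequence N_{d,r} satisfies N_{d,r}(1) = 1 and N_{d,r}(s) = N_{d,r}(s−1) + N_{d,r}(s−d−1) for all s ≥ 2, where N_{d,r}(t) := 1 for t < 0 and N_{d,r}(0) := N_{d,1}(r). -/

import Mathlib

/-- A finite set of naturals is `d`-th order twin-free:
any two distinct elements differ by more than `d`. -/
def TwinFree (d : ℕ) (β : Finset ℕ) : Prop :=
  ∀ x ∈ β, ∀ y ∈ β, x ≠ y → d < max x y - min x y

instance (d : ℕ) : DecidablePred (TwinFree d) := fun β => by
  unfold TwinFree; infer_instance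


/-- `N d r s`: the number of `d`-th order twin-free subsets `β` of `{1, …, s+r−1}`
such that `x ∈ β, x ≥ s → x − s ∈ β` and `x ∈ β, x ≥ s+r → x − (s+r) ∈ β`. -/
def N (d r s : ℕ) : ℕ :=
  ((Finset.Icc 1 (s + r - 1)).powerset.filter
    (fun β => TwinFree d β ∧ (∀ x ∈ β, s ≤ x → x - s ∈ β) ∧
      (∀ x ∈ β, s + r ≤ x → x - (s + r) ∈ β))).card


/-- `N1 d t = N_{d,1}(t)`: the number of `d`-th order twin-free subsets of `{1, …, t−1}`. -/
def N1 (d t : ℕ) : ℕ := ((Finset.Icc 1 (t - 1)).powerset.filter (TwinFree d)).card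

/-- Extension of `N_{d,1}` to integer arguments, with value `1` for `t ≤ 0`. -/
def N1ext (d : ℕ) (t : ℤ) : ℕ := if t ≤ 0 then 1 else N1 d t.toNat

/-- Extension of N_{d,r} to integer arguments: 1 for t < 0 and N_{d,1}(r) for t = 0. -/
def Next (d r : ℕ) (t : ℤ) : ℕ :=
  if t < 0 then 1 else if t = 0 then N1 d r else N d r t.toNat

lemma twinFree_iff (d : ℕ) (β : Finset ℕ) :
    TwinFree d β ↔ ∀ x ∈ β, ∀ y ∈ β, x < y → x + d < y := by
  constructor
  · intro h x hx y hy hxy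
    have := h x hx y hy (by omega); omega
  · intro h x hx y hy hne
    rcases lt_or_gt_of_ne hne with h1 | h1
    · have := h x hx y hy h1; omega
    · have := h y hy x hx h1; omega

lemma twinFree_subset {d : ℕ} {β β' : Finset ℕ} (h : β' ⊆ β) (ht : TwinFree d β) :
    TwinFree d β' := fun x hx y hy => ht x (h hx) y (h hy)

def g (d m : ℕ) : ℕ := ((Finset.Icc 1 m).powerset.filter (TwinFree d)).card

section
variable (d r s : ℕ)

-- the `Q j` card lemma
lemma Qcard (hr : 0 < r) (hrd : r ≤ d) (hds : d + 1 ≤ s) (j : ℕ) (hj : j ∈ Finset.Icc 1 (r-1)) :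
    ((Finset.Icc 1 (s + r - 1)).powerset.filter
      (fun β => (TwinFree d β ∧ (∀ x ∈ β, s ≤ x → x - s ∈ β) ∧
        (∀ x ∈ β, s + r ≤ x → x - (s + r) ∈ β)) ∧ s + j ∈ β)).card
    = g d (s - 2*d - 1) := by
  simp only [Finset.mem_Icc] at hj
  unfold g
  apply Finset.card_nbij' (fun β => ((β.erase j).erase (s+j)).image (fun y => y - (j+d)))
    (fun γ => insert j (insert (s+j) (γ.image (fun y => y + (j+d)))))
  · intro β hβ
    simp only [Finset.mem_coe, Finset.mem_filter, Finset.mem_powerset] at hβ ⊢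
    obtain ⟨hsub, ⟨htf, hc1, _⟩, hmem⟩ := hβ
    have hjmem : j ∈ β := by
      have := hc1 (s+j) hmem (by omega)
      simpa [Nat.add_sub_cancel_left] using this
    -- structural bounds
    have hstruct : ∀ y ∈ β, y ≠ j → y ≠ s + j → j + d + 1 ≤ y ∧ y ≤ s + j - d - 1 := by
      intro y hy hyj hysj
      have hicc := hsub hy; simp only [Finset.mem_Icc] at hicc
      have hys : y < s := by
        by_contra hge
        push_neg at hge
        have h2 : y - s ∈ β := hc1 y hy hge
        have h3 := hsub h2; simp only [Finset.mem_Icc] at h3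
        -- y = s + k with 1 ≤ k ≤ r-1, k ≠ j
        have hk : y - s ≠ j := by omega
        have := htf y hy (s+j) hmem (by omega)
        omega
      have h4 := htf y hy j hjmem hyj
      have h5 := htf y hy (s+j) hmem (by omega)
      omega
    constructor
    · intro z hz
      simp only [Finset.mem_image, Finset.mem_erase] at hz
      obtain ⟨a, ⟨hasj, haj, ha⟩, rfl⟩ := hz
      have := hstruct a ha haj hasj
      simp only [Finset.mem_Icc]; omega
    · rw [twinFree_iff]
      intro x hx y hy hxy
      simp only [Finset.mem_image, Finset.mem_erase] at hx hy
      obtain ⟨a, ⟨hasj, haj, ha⟩, rfl⟩ := hx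
      obtain ⟨b, ⟨hbsj, hbj, hb⟩, rfl⟩ := hy
      have h6 := hstruct a ha haj hasj
      have h7 := hstruct b hb hbj hbsj
      have hab : a < b := by omega
      have := (twinFree_iff d β).1 htf a ha b hb hab
      omega
  · intro γ hγ
    simp only [Finset.mem_coe, Finset.mem_filter, Finset.mem_powerset] at hγ ⊢
    obtain ⟨hsub, htf⟩ := hγ
    have hbound : ∀ y ∈ γ, 1 ≤ y ∧ y ≤ s - 2*d - 1 := by
      intro y hy; have := hsub hy; simpa [Finset.mem_Icc] using this
    refine ⟨?_, ⟨?_, ?_, ?_⟩, by simp⟩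
    · intro y hy
      simp only [Finset.mem_insert, Finset.mem_image] at hy
      simp only [Finset.mem_Icc]
      rcases hy with rfl | rfl | ⟨a, ha, rfl⟩
      · omega
      · omega
      · have := hbound a ha; omega
    · rw [twinFree_iff]
      intro x hx y hy hxy
      simp only [Finset.mem_insert, Finset.mem_image] at hx hy
      rcases hx with rfl | rfl | ⟨a, ha, rfl⟩ <;>
        rcases hy with rfl | rfl | ⟨b, hb, rfl⟩
      · omega
      · omega
      · have := hbound b hb; omega
      · omega
      · omega
      · have := hbound b hb; omega
      · have := hbound a ha; omega
      · have := hbound a ha; omega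
      · have h6 := hbound a ha; have h7 := hbound b hb
        have hab : a < b := by omega
        have := (twinFree_iff d γ).1 htf a ha b hb hab
        omega
    · intro x hx hsx
      simp only [Finset.mem_insert, Finset.mem_image] at hx
      rcases hx with rfl | rfl | ⟨a, ha, rfl⟩
      · omega
      · simp only [Finset.mem_insert, Finset.mem_image]
        left; omega
      · have := hbound a ha; omega
    · intro x hx hsx
      simp only [Finset.mem_insert, Finset.mem_image] at hx
      rcases hx with rfl | rfl | ⟨a, ha, rfl⟩
      · omega
      · omega
      · have := hbound a ha; omega
  · -- left inverse
    intro β hβ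
    simp only [Finset.mem_coe, Finset.mem_filter, Finset.mem_powerset] at hβ
    obtain ⟨hsub, ⟨htf, hc1, _⟩, hmem⟩ := hβ
    have hjmem : j ∈ β := by
      have := hc1 (s+j) hmem (by omega)
      simpa [Nat.add_sub_cancel_left] using this
    have hstruct : ∀ y ∈ β, y ≠ j → y ≠ s + j → j + d + 1 ≤ y ∧ y ≤ s + j - d - 1 := by
      intro y hy hyj hysj
      have hicc := hsub hy; simp only [Finset.mem_Icc] at hicc
      have hys : y < s := by
        by_contra hge
        push_neg at hge
        have h2 : y - s ∈ β := hc1 y hy hge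
        have h3 := hsub h2; simp only [Finset.mem_Icc] at h3
        have := htf y hy (s+j) hmem (by omega)
        omega
      have h4 := htf y hy j hjmem hyj
      have h5 := htf y hy (s+j) hmem (by omega)
      omega
    ext z
    simp only [Finset.mem_insert, Finset.mem_image, Finset.mem_erase]
    constructor
    · rintro (rfl | rfl | ⟨a, ⟨b, ⟨hbsj, hbj, hb⟩, rfl⟩, rfl⟩)
      · exact hjmem
      · exact hmem
      · have := hstruct b hb hbj hbsj
        have : b - (j+d) + (j+d) = b := by omega
        rwa [this]
    · intro hz
      by_cases h1 : z = j
      · left; exact h1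
      by_cases h2 : z = s + j
      · right; left; exact h2
      right; right
      refine ⟨z - (j+d), ⟨z, ⟨h2, h1, hz⟩, rfl⟩, ?_⟩
      have := hstruct z hz h1 h2; omega
  · -- right inverse
    intro γ hγ
    simp only [Finset.mem_coe, Finset.mem_filter, Finset.mem_powerset] at hγ
    obtain ⟨hsub, htf⟩ := hγ
    have hbound : ∀ y ∈ γ, 1 ≤ y ∧ y ≤ s - 2*d - 1 := by
      intro y hy; have := hsub hy; simpa [Finset.mem_Icc] using this
    ext z
    simp only [Finset.mem_image, Finset.mem_erase, Finset.mem_insert]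
    constructor
    · rintro ⟨a, ⟨hasj, haj, (rfl | rfl | ⟨b, hb, rfl⟩)⟩, rfl⟩
      · exact absurd rfl haj
      · exact absurd rfl hasj
      · have := hbound b hb
        have : b + (j+d) - (j+d) = b := by omega
        rwa [this]
    · intro hz
      have := hbound z hz
      refine ⟨z + (j+d), ⟨by omega, by omega, by right; right; exact ⟨z, hz, rfl⟩⟩, by omega⟩
end

lemma g_zero (d : ℕ) : g d 0 = 1 := by
  have : (Finset.Icc 1 0 : Finset ℕ) = ∅ := by simp
  simp [g, this, Finset.filter_singleton, TwinFree]

lemma N_one (d r : ℕ) (hr : 0 < r) (hrd : r ≤ d) : N d r 1 = 1 := by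
  unfold N
  have : (Finset.Icc 1 (1 + r - 1)).powerset.filter
      (fun β => TwinFree d β ∧ (∀ x ∈ β, 1 ≤ x → x - 1 ∈ β) ∧
        (∀ x ∈ β, 1 + r ≤ x → x - (1 + r) ∈ β)) = {∅} := by
    ext β
    simp only [Finset.mem_filter, Finset.mem_powerset, Finset.mem_singleton]
    constructor
    · rintro ⟨hsub, htf, hc1, _⟩
      by_contra hne
      obtain ⟨x, hx⟩ := Finset.nonempty_iff_ne_empty.2 hne
      have hicc := hsub hx; simp only [Finset.mem_Icc] at hicc
      have h2 : x - 1 ∈ β := hc1 x hx (by omega)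
      have h3 := hsub h2; simp only [Finset.mem_Icc] at h3
      have := htf x hx (x-1) h2 (by omega)
      omega
    · rintro rfl
      refine ⟨by simp, ?_, by simp, by simp⟩
      intro x hx; simp at hx
  rw [this]; simp

lemma N_closed (d r : ℕ) (hr : 0 < r) (hrd : r ≤ d) (s : ℕ) (hs : 1 ≤ s) :
    N d r s = g d (s - 1) + (if d + 1 ≤ s then (r - 1) * g d (s - 2*d - 1) else 0) := by
  rcases Nat.eq_or_lt_of_le hs with h1 | hs2
  · rw [← h1, N_one d r hr hrd]
    have : ¬ d + 1 ≤ 1 := by omega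
    simp [this, g_zero]
  -- now 2 ≤ s
  classical
  unfold N
  rw [← Finset.card_filter_add_card_filter_not (fun β => ∀ x ∈ β, x < s)
    (s := (Finset.Icc 1 (s + r - 1)).powerset.filter _)]
  rw [Finset.filter_filter, Finset.filter_filter]
  have part1 : ((Finset.Icc 1 (s + r - 1)).powerset.filter
      (fun β => (TwinFree d β ∧ (∀ x ∈ β, s ≤ x → x - s ∈ β) ∧
        (∀ x ∈ β, s + r ≤ x → x - (s + r) ∈ β)) ∧ ∀ x ∈ β, x < s)).card = g d (s - 1) := by
    unfold g
    congr 1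
    ext β
    simp only [Finset.mem_filter, Finset.mem_powerset]
    constructor
    · rintro ⟨hsub, ⟨htf, _, _⟩, hlt⟩
      refine ⟨fun y hy => ?_, htf⟩
      have h2 := hsub hy; simp only [Finset.mem_Icc] at h2 ⊢
      have := hlt y hy; omega
    · rintro ⟨hsub, htf⟩
      have hb : ∀ y ∈ β, 1 ≤ y ∧ y ≤ s - 1 := by
        intro y hy; have := hsub hy; simpa [Finset.mem_Icc] using this
      refine ⟨fun y hy => ?_, ⟨htf, fun x hx hsx => ?_, fun x hx hsx => ?_⟩, fun x hx => ?_⟩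
      · have := hb y hy; simp only [Finset.mem_Icc]; omega
      · have := hb x hx; omega
      · have := hb x hx; omega
      · have := hb x hx; omega
  rw [part1]
  congr 1
  by_cases hds : d + 1 ≤ s
  · simp only [hds, if_true]
    -- part 2 equals biUnion over j
    have hbu : (Finset.Icc 1 (s + r - 1)).powerset.filter
        (fun β => (TwinFree d β ∧ (∀ x ∈ β, s ≤ x → x - s ∈ β) ∧
          (∀ x ∈ β, s + r ≤ x → x - (s + r) ∈ β)) ∧ ¬ ∀ x ∈ β, x < s)
        = (Finset.Icc 1 (r-1)).biUnion (fun j =>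
            (Finset.Icc 1 (s + r - 1)).powerset.filter
              (fun β => (TwinFree d β ∧ (∀ x ∈ β, s ≤ x → x - s ∈ β) ∧
                (∀ x ∈ β, s + r ≤ x → x - (s + r) ∈ β)) ∧ s + j ∈ β)) := by
      ext β
      simp only [Finset.mem_biUnion, Finset.mem_filter, Finset.mem_powerset, Finset.mem_Icc]
      constructor
      · rintro ⟨hsub, hV, hex⟩
        push_neg at hex
        obtain ⟨x, hx, hsx⟩ := hex
        have hicc := hsub hx; simp only [Finset.mem_Icc] at hicc
        have h2 : x - s ∈ β := hV.2.1 x hx hsx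
        have h3 := hsub h2; simp only [Finset.mem_Icc] at h3
        refine ⟨x - s, ⟨by omega, by omega⟩, hsub, hV, ?_⟩
        have : s + (x - s) = x := by omega
        rwa [this]
      · rintro ⟨j, ⟨hj1, hj2⟩, hsub, hV, hmem⟩
        refine ⟨hsub, hV, ?_⟩
        intro hall
        have := hall (s+j) hmem; omega
    rw [hbu, Finset.card_biUnion, Finset.sum_congr rfl
      (fun j hj => Qcard d r s hr hrd hds j hj)]
    · rw [Finset.sum_const, Nat.card_Icc, smul_eq_mul]
      rw [Nat.add_sub_cancel]
    · -- disjoint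
      intro j hj j' hj' hne
      simp only [Finset.mem_coe, Finset.mem_Icc] at hj hj'
      change Disjoint _ _
      rw [Finset.disjoint_left]
      intro β hβ hβ'
      simp only [Finset.mem_filter, Finset.mem_powerset] at hβ hβ'
      obtain ⟨_, ⟨htf, _, _⟩, hm⟩ := hβ
      obtain ⟨_, _, hm'⟩ := hβ'
      have := htf (s+j) hm (s+j') hm' (by omega)
      omega
  · -- s ≤ d : part 2 is empty
    simp only [hds, if_false]
    convert Finset.card_empty
    rw [Finset.eq_empty_iff_forall_notMem]
    intro β hβ
    simp only [Finset.mem_filter, Finset.mem_powerset] at hβ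
    obtain ⟨hsub, ⟨htf, hc1, _⟩, hex⟩ := hβ
    push_neg at hex
    obtain ⟨x, hx, hsx⟩ := hex
    have h2 : x - s ∈ β := hc1 x hx hsx
    have h3 := hsub h2; simp only [Finset.mem_Icc] at h3
    have := htf x hx (x - s) h2 (by omega)
    omega

lemma g_rec (d m : ℕ) (hm : 1 ≤ m) : g d m = g d (m - 1) + g d (m - d - 1) := by
  classical
  have key : ((Finset.Icc 1 m).powerset.filter (fun β => TwinFree d β ∧ m ∈ β)).card
      + ((Finset.Icc 1 m).powerset.filter (fun β => TwinFree d β ∧ ¬ m ∈ β)).card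
      = g d m := by
    unfold g
    rw [← Finset.card_filter_add_card_filter_not (fun β => m ∈ β)
      (s := (Finset.Icc 1 m).powerset.filter (TwinFree d))]
    rw [Finset.filter_filter, Finset.filter_filter]
  have h1 : ((Finset.Icc 1 m).powerset.filter (fun β => TwinFree d β ∧ ¬ m ∈ β)).card
      = g d (m - 1) := by
    unfold g
    congr 1
    ext β
    simp only [Finset.mem_filter, Finset.mem_powerset]
    constructor
    · rintro ⟨hsub, htf, hnm⟩
      refine ⟨fun y hy => ?_, htf⟩
      have := hsub hy
      simp only [Finset.mem_Icc] at this ⊢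
      have : y ≠ m := fun h => hnm (h ▸ hy)
      have := hsub hy
      simp only [Finset.mem_Icc] at this
      omega
    · rintro ⟨hsub, htf⟩
      refine ⟨fun y hy => ?_, htf, fun hc => ?_⟩
      · have := hsub hy
        simp only [Finset.mem_Icc] at this ⊢
        omega
      · have := hsub hc
        simp only [Finset.mem_Icc] at this
        omega
  have h2 : ((Finset.Icc 1 m).powerset.filter (fun β => TwinFree d β ∧ m ∈ β)).card
      = g d (m - d - 1) := by
    unfold g
    apply Finset.card_nbij' (fun β => β.erase m) (fun γ => insert m γ)
    · intro β hβ
      simp only [Finset.mem_coe, Finset.mem_filter, Finset.mem_powerset] at hβ ⊢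
      obtain ⟨hsub, htf, hmem⟩ := hβ
      refine ⟨fun y hy => ?_, twinFree_subset (Finset.erase_subset _ _) htf⟩
      rw [Finset.mem_erase] at hy
      obtain ⟨hne, hyβ⟩ := hy
      have h3 := hsub hyβ
      simp only [Finset.mem_Icc] at h3 ⊢
      have hlt : y < m := by omega
      have := (twinFree_iff d β).1 htf y hyβ m hmem hlt
      omega
    · intro γ hγ
      simp only [Finset.mem_coe, Finset.mem_filter, Finset.mem_powerset] at hγ ⊢
      obtain ⟨hsub, htf⟩ := hγ
      have hbound : ∀ y ∈ γ, 1 ≤ y ∧ y ≤ m - d - 1 := by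
        intro y hy; have := hsub hy; simpa [Finset.mem_Icc] using this
      refine ⟨?_, ?_, Finset.mem_insert_self _ _⟩
      · intro y hy
        rcases Finset.mem_insert.1 hy with rfl | hyγ
        · simp [Finset.mem_Icc]; omega
        · have := hbound y hyγ; simp [Finset.mem_Icc]; omega
      · rw [twinFree_iff]
        intro x hx y hy hxy
        rcases Finset.mem_insert.1 hx with rfl | hxγ
        · rcases Finset.mem_insert.1 hy with rfl | hyγ
          · omega
          · have := hbound y hyγ; omega
        · rcases Finset.mem_insert.1 hy with rfl | hyγ
          · have := hbound x hxγ; omega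
          · exact (twinFree_iff d γ).1 htf x hxγ y hyγ hxy
    · intro β hβ
      simp only [Finset.mem_coe, Finset.mem_filter, Finset.mem_powerset] at hβ
      exact Finset.insert_erase hβ.2.2
    · intro γ hγ
      simp only [Finset.mem_coe, Finset.mem_filter, Finset.mem_powerset] at hγ
      apply Finset.erase_insert
      intro hc
      have := hγ.1 hc
      simp only [Finset.mem_Icc] at this
      omega
  omega

lemma g_small (d : ℕ) : ∀ m, m ≤ d → g d m = m + 1 := by
  intro m
  induction m with
  | zero => intro _; exact g_zero d
  | succ k ih =>
    intro h
    rw [g_rec d (k+1) (by omega)]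
    have h1 : k + 1 - 1 = k := by omega
    have h2 : k + 1 - d - 1 = 0 := by omega
    rw [h1, h2, g_zero, ih (by omega)]


lemma N1_eq_g (d t : ℕ) : N1 d t = g d (t - 1) := rfl

theorem N_recurrence (d r : ℕ) (hr : 0 < r) (hrd : r ≤ d) :
    N d r 1 = 1 ∧
    ∀ s : ℕ, 2 ≤ s →
      N d r s = Next d r ((s : ℤ) - 1) + Next d r ((s : ℤ) - d - 1) := by
  refine ⟨N_one d r hr hrd, ?_⟩
  intro s hs
  have e1 : Next d r ((s : ℤ) - 1) = N d r (s - 1) := by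
    simp only [Next]
    rw [if_neg (by omega), if_neg (by omega)]
    congr 1
    omega
  by_cases hc1 : s ≤ d
  · -- case A
    have e2 : Next d r ((s : ℤ) - d - 1) = 1 := by
      simp only [Next]; rw [if_pos (by omega)]
    rw [e1, e2]
    rw [N_closed d r hr hrd s (by omega), N_closed d r hr hrd (s-1) (by omega)]
    rw [if_neg (by omega), if_neg (by omega)]
    rw [g_rec d (s-1) (by omega)]
    have i1 : s - 1 - 1 = s - 2 := by omega
    have i2 : s - 1 - d - 1 = 0 := by omega
    rw [i1, i2, g_zero]
  · by_cases hc2 : s = d + 1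
    · -- case B
      subst hc2
      have e2 : Next d r ((d + 1 : ℕ) - (d:ℤ) - 1) = N1 d r := by
        simp only [Next]
        rw [if_neg (by push_cast; omega), if_pos (by push_cast; omega)]
      rw [e1, e2, N1_eq_g]
      rw [N_closed d r hr hrd (d+1) (by omega), N_closed d r hr hrd (d+1-1) (by omega)]
      rw [if_pos (by omega), if_neg (by omega)]
      have i1 : d + 1 - 1 = d := by omega
      have i2 : d + 1 - 2*d - 1 = 0 := by omega
      rw [i1, i2, g_zero, mul_one]
      rw [g_rec d d (by omega)]
      have i3 : d - d - 1 = 0 := by omega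
      rw [i3, g_zero]
      have hg : g d (r - 1) = r - 1 + 1 := g_small d (r-1) (by omega)
      omega
    · -- case C : d + 2 ≤ s
      have hds : d + 2 ≤ s := by omega
      have e2 : Next d r ((s : ℤ) - d - 1) = N d r (s - d - 1) := by
        simp only [Next]
        rw [if_neg (by omega), if_neg (by omega)]
        congr 1
        omega
      rw [e1, e2]
      rw [N_closed d r hr hrd s (by omega), N_closed d r hr hrd (s-1) (by omega),
        N_closed d r hr hrd (s-d-1) (by omega)]
      rw [if_pos (by omega), if_pos (by omega)]
      rw [g_rec d (s-1) (by omega)]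
      have i1 : s - 1 - 1 = s - 2 := by omega
      have i2 : s - 1 - d - 1 = s - d - 2 := by omega
      have i3 : s - 1 - 2*d - 1 = s - 2*d - 2 := by omega
      have i4 : s - d - 1 - 1 = s - d - 2 := by omega
      rw [i1, i2, i3, i4]
      by_cases hc3 : 2*d + 2 ≤ s
      · rw [if_pos (by omega)]
        rw [g_rec d (s - 2*d - 1) (by omega)]
        have i5 : s - 2*d - 1 - 1 = s - 2*d - 2 := by omega
        have i6 : s - 2*d - 1 - d - 1 = s - d - 1 - 2*d - 1 := by omega
        rw [i5, i6, Nat.mul_add]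
        ring
      · rw [if_neg (by omega)]
        have i5 : s - 2*d - 1 = 0 := by omega
        have i6 : s - 2*d - 2 = 0 := by omega
        rw [i5, i6, g_zero, mul_one]
        omega
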